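/- Suppose ρ = p/q with gcd(p,q) = 1 and N ∣ q. Then L²(μ_{ρ,N}) admits an infinite orthonormal set of exponentials e^{-2πiλx}. -/

import Mathlib

open MeasureTheory Complex Real
open scoped ENNReal

/-- The Fourier transform `μ̂(ξ) = ∫ e^{-2πiξx} dμ(x)`. -/
noncomputable def FT (μ : Measure ℝ) (ξ : ℝ) : ℂ :=
  ∫ x, Complex.exp (-2 * Real.pi * Complex.I * ξ * x) ∂μ

/-- `μ` is the self-similar measure `μ(·) = (1/N) ∑_{j<N} μ(ρ⁻¹(·) − j)`. -/
def IsSelfSimilar (ρ : ℝ) (N : ℕ) (μ : Measure ℝ) : Prop :=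
  μ = (N : ℝ≥0∞)⁻¹ • ∑ j ∈ Finset.range N, μ.map (fun x => ρ * x + (j : ℝ))

/-- Orthonormality of the exponentials `e_λ, λ ∈ Λ`, in `L²(μ)`. -/
def ExpOrthonormal (μ : Measure ℝ) (Λ : Set ℝ) : Prop :=
  ∀ l ∈ Λ, ∀ l' ∈ Λ, FT μ (l - l') = if l = l' then 1 else 0

noncomputable def Mfun (N : ℕ) (ξ : ℝ) : ℂ :=
  (N : ℂ)⁻¹ * ∑ j ∈ Finset.range N, Complex.exp (-2 * Real.pi * Complex.I * ξ * j)

lemma norm_exp_eq_one (ξ x : ℝ) : ‖Complex.exp (-2 * Real.pi * Complex.I * ξ * x)‖ = 1 := by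
  rw [Complex.norm_exp]
  norm_num [Complex.mul_re, Complex.mul_im]

lemma ft_integrable (μ : Measure ℝ) [IsFiniteMeasure μ] (ξ : ℝ) :
    Integrable (fun x : ℝ => Complex.exp (-2 * Real.pi * Complex.I * ξ * x)) μ := by
  have hc : Continuous fun x : ℝ => Complex.exp (-2 * Real.pi * Complex.I * ξ * x) := by
    fun_prop
  refine (integrable_const (1 : ℝ)).mono' hc.aestronglyMeasurable ?_
  filter_upwards with x
  exact le_of_eq (norm_exp_eq_one ξ x)

lemma FT_step (ρ : ℝ) (N : ℕ) (μ : Measure ℝ) [IsProbabilityMeasure μ]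
    (hμ : IsSelfSimilar ρ N μ) (ξ : ℝ) :
    FT μ ξ = Mfun N ξ * FT μ (ρ * ξ) := by
  have hmeas : ∀ j : ℕ, Measurable (fun x : ℝ => ρ * x + (j : ℝ)) := fun j =>
    (measurable_const_mul ρ).add_const _
  have hprob : ∀ j : ℕ, IsProbabilityMeasure (μ.map (fun x : ℝ => ρ * x + (j : ℝ))) := fun j =>
    Measure.isProbabilityMeasure_map (hmeas j).aemeasurable
  have hcont : Continuous fun x : ℝ => Complex.exp (-2 * Real.pi * Complex.I * ξ * x) := by
    fun_prop
  conv_lhs => rw [FT, hμ]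
  rw [integral_smul_measure, integral_finset_sum_measure (fun j _ => by
    have := hprob j
    exact ft_integrable _ ξ)]
  have hmap : ∀ j ∈ Finset.range N,
      (∫ x, Complex.exp (-2 * Real.pi * Complex.I * ξ * x)
        ∂(μ.map (fun x : ℝ => ρ * x + (j : ℝ))))
      = Complex.exp (-2 * Real.pi * Complex.I * ξ * j) * FT μ (ρ * ξ) := by
    intro j _
    rw [integral_map (hmeas j).aemeasurable hcont.aestronglyMeasurable]
    rw [FT, ← integral_const_mul]
    congr 1
    funext x
    rw [← Complex.exp_add]
    congr 1
    push_cast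
    ring
  rw [Finset.sum_congr rfl hmap, ← Finset.sum_mul, Mfun]
  simp only [ENNReal.toReal_inv, ENNReal.toReal_natCast]
  rw [Complex.real_smul]
  push_cast
  ring

lemma FT_zero_of (ρ : ℝ) (N : ℕ) (μ : Measure ℝ) [IsProbabilityMeasure μ]
    (hμ : IsSelfSimilar ρ N μ) (m : ℕ) (ξ : ℝ) (h : Mfun N (ρ ^ m * ξ) = 0) :
    FT μ ξ = 0 := by
  induction m generalizing ξ with
  | zero =>
    rw [FT_step ρ N μ hμ ξ]
    simp only [pow_zero, one_mul] at h
    rw [h, zero_mul]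
  | succ m ih =>
    rw [FT_step ρ N μ hμ ξ, ih (ρ * ξ) (by rw [← h]; ring_nf), mul_zero]

lemma Mfun_zero (N : ℕ) (hN : 1 < N) (a : ℤ) (ha : ¬ (N : ℤ) ∣ a) :
    Mfun N ((a : ℝ) / N) = 0 := by
  have hN0 : (N : ℂ) ≠ 0 := Nat.cast_ne_zero.mpr (by omega)
  have hNR : (N : ℝ) ≠ 0 := Nat.cast_ne_zero.mpr (by omega)
  set c : ℂ := Complex.exp (-2 * Real.pi * Complex.I * ((a : ℝ) / N)) with hc
  have hterm : ∀ j : ℕ, Complex.exp (-2 * Real.pi * Complex.I * ((a : ℝ) / N : ℝ) * j) = c ^ j := by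
    intro j
    rw [hc, ← Complex.exp_nat_mul]
    congr 1
    push_cast
    ring
  have hcN : c ^ N = 1 := by
    rw [hc, ← Complex.exp_nat_mul]
    have : (N : ℂ) * (-2 * Real.pi * Complex.I * ((a : ℝ) / N)) = (-a : ℤ) * (2 * Real.pi * Complex.I) := by
      push_cast
      field_simp
    rw [this, Complex.exp_int_mul_two_pi_mul_I]
  have hc1 : c ≠ 1 := by
    intro h
    rw [hc, Complex.exp_eq_one_iff] at h
    obtain ⟨n, hn⟩ := h
    apply ha
    refine ⟨-n, ?_⟩
    have hπ : (2 : ℂ) * Real.pi * Complex.I ≠ 0 := by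
      simp [Real.pi_ne_zero, Complex.I_ne_zero]
    have : (a : ℂ) = N * (-n) := by
      have h2 : -(((a:ℝ):ℂ) / N) * (2 * Real.pi * Complex.I) = n * (2 * Real.pi * Complex.I) := by
        rw [← hn]; ring
      have h3 : -(((a:ℝ):ℂ) / N) = n := mul_right_cancel₀ hπ h2
      field_simp at h3
      linear_combination -h3
    exact_mod_cast this
  rw [Mfun]
  have : ∑ j ∈ Finset.range N, Complex.exp (-2 * Real.pi * Complex.I * ((a : ℝ) / N : ℝ) * j)
      = ∑ j ∈ Finset.range N, c ^ j := Finset.sum_congr rfl fun j _ => hterm j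
  rw [this, geom_sum_eq hc1, hcN]
  simp

lemma FT_at_zero (μ : Measure ℝ) [IsProbabilityMeasure μ] : FT μ 0 = 1 := by
  simp [FT]

lemma FT_neg (μ : Measure ℝ) (ξ : ℝ) : FT μ (-ξ) = starRingEnd ℂ (FT μ ξ) := by
  rw [FT, FT, ← integral_conj]
  congr 1
  funext x
  rw [← Complex.exp_conj]
  congr 1
  simp only [map_mul, map_neg, Complex.conj_I, Complex.conj_ofReal, map_ofNat]
  push_cast
  ring

theorem stmt_17 (p q : ℕ) (hp : 0 < p) (hpq : p < q) (hcop : Nat.Coprime p q)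
    (N : ℕ) (hN : 1 < N) (hNq : N ∣ q) (ρ : ℝ) (hρ : ρ = (p : ℝ) / q)
    (μ : Measure ℝ) [IsProbabilityMeasure μ] (hμ : IsSelfSimilar ρ N μ) :
    ∃ Λ : Set ℝ, Λ.Infinite ∧ ExpOrthonormal μ Λ := by
  have hq1 : 1 < q := lt_of_le_of_lt hp hpq
  have hqR : (1 : ℝ) < q := by exact_mod_cast hq1
  have hqR0 : (q : ℝ) ≠ 0 := by positivity
  have hNR0 : (N : ℝ) ≠ 0 := Nat.cast_ne_zero.mpr (by omega)
  set f : ℕ → ℝ := fun n => (q : ℝ) ^ (n + 1) / N with hf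
  have hmono : StrictMono f := by
    intro a b hab
    have h1 : (q : ℝ) ^ (a + 1) < (q : ℝ) ^ (b + 1) :=
      pow_lt_pow_right₀ hqR (by omega)
    exact div_lt_div_of_pos_right h1 (by positivity)
  have key : ∀ m n : ℕ, m < n → FT μ (f n - f m) = 0 := by
    intro m n hmn
    obtain ⟨t, rfl⟩ : ∃ t, n = m + t + 1 := ⟨n - m - 1, by omega⟩
    set a : ℤ := (p : ℤ) ^ (m + 1) * (q : ℤ) ^ (t + 1) - (p : ℤ) ^ (m + 1) with ha
    have hNa : ¬ (N : ℤ) ∣ a := by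
      intro hdvd
      have hq : (N : ℤ) ∣ (q : ℤ) := Int.natCast_dvd_natCast.mpr hNq
      have h1 : (N : ℤ) ∣ (p : ℤ) ^ (m + 1) * (q : ℤ) ^ (t + 1) :=
        Dvd.dvd.mul_left (hq.trans (dvd_pow_self _ (by omega))) _
      have h2 := h1.sub hdvd
      have heq : (p : ℤ) ^ (m + 1) * (q : ℤ) ^ (t + 1) - a = (p : ℤ) ^ (m + 1) := by
        rw [ha]; ring
      rw [heq] at h2
      have h3 : N ∣ p ^ (m + 1) := by exact_mod_cast h2
      have hcN : Nat.Coprime N p := (hcop.coprime_dvd_right hNq).symm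
      have := (hcN.pow_right (m + 1)).eq_one_of_dvd h3
      omega
    have hξ : ρ ^ (m + 1) * (f (m + t + 1) - f m) = (a : ℝ) / N := by
      simp only [hf, ha, hρ]
      push_cast
      rw [div_pow]
      field_simp
      ring
    exact FT_zero_of ρ N μ hμ (m + 1) _ (by rw [hξ]; exact Mfun_zero N hN a hNa)
  refine ⟨Set.range f, Set.infinite_range_of_injective hmono.injective, ?_⟩
  rintro l ⟨n, rfl⟩ l' ⟨m, rfl⟩
  by_cases h : n = m
  · subst h
    rw [sub_self, if_pos rfl, FT_at_zero μ]
  · rw [if_neg (fun he => h (hmono.injective he))]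
    rcases lt_or_gt_of_ne h with hlt | hgt
    · rw [show f n - f m = -(f m - f n) by ring, FT_neg, key n m hlt, map_zero]
    · exact key m n hgt
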